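/- For any temporal graph G with lifetime contained in [1,T], there exists a (Δ₁,Δ₂)-cluster temporal graph G' minimising the edit distance |G △ G'| (symmetric difference of time-edge sets) such that all time-edges of G' have times in [1,T]. -/

import Mathlib

/-- A time-edge: an (undirected) edge together with a time label. -/
abbrev TimeEdge := Sym2 ℕ × ℕ

/-- Vertices appearing in a set of time-edges. -/
def verts (S : Set TimeEdge) : Set ℕ := {v | ∃ te ∈ S, v ∈ te.1}

/-- Times appearing in a set of time-edges. -/
def times (S : Set TimeEdge) : Set ℕ := Prod.snd '' S

/-- The lifetime interval of a set of time-edges. -/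
def lifetime (S : Set TimeEdge) : Set ℕ := Set.Icc (sInf (times S)) (sSup (times S))

/-- Two sets of time-edges are Δ₂-independent if their vertex sets are disjoint or
their lifetime intervals are at temporal distance at least Δ₂. -/
def Indep (Δ₂ : ℕ) (S₁ S₂ : Set TimeEdge) : Prop :=
  Disjoint (verts S₁) (verts S₂) ∨
    ∀ s ∈ lifetime S₁, ∀ t ∈ lifetime S₂, Δ₂ ≤ max s t - min s t

/-- A set of time-edges is Δ₂-indivisible if it cannot be partitioned into two or more
nonempty pairwise Δ₂-independent subsets. -/
def Indivisible (Δ₂ : ℕ) (S : Set TimeEdge) : Prop :=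
  ¬ ∃ P : Set (Set TimeEdge), P.Nontrivial ∧ (∀ A ∈ P, A.Nonempty) ∧
      ⋃₀ P = S ∧ P.PairwiseDisjoint id ∧ P.Pairwise (Indep Δ₂)

/-- The edge `e` is Δ₁-dense in `[a,b]` with respect to the time-edge set `S`. -/
def DenseIn (S : Set TimeEdge) (Δ₁ : ℕ) (e : Sym2 ℕ) (a b : ℕ) : Prop :=
  ∀ τ ∈ Set.Icc a (max a (b + 1 - Δ₁)), ∃ t, t ∈ Set.Icc τ (τ + Δ₁ - 1) ∧ (e, t) ∈ S

/-- A set of time-edges forms a Δ₁-temporal clique if every pair of its vertices is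
joined by an edge Δ₁-dense in its lifetime. -/
def IsTemporalClique (Δ₁ : ℕ) (K : Set TimeEdge) : Prop :=
  ∀ x ∈ verts K, ∀ y ∈ verts K, x ≠ y →
    DenseIn K Δ₁ s(x, y) (sInf (times K)) (sSup (times K))

/-- A (Δ₁,Δ₂)-cluster temporal graph: the time-edges partition into pairwise
Δ₂-independent Δ₁-temporal cliques. -/
def IsClusterTemporalGraph (Δ₁ Δ₂ : ℕ) (E : Set TimeEdge) : Prop :=
  ∃ P : Set (Set TimeEdge), ⋃₀ P = E ∧ P.PairwiseDisjoint id ∧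
    (∀ K ∈ P, IsTemporalClique Δ₁ K) ∧ P.Pairwise (Indep Δ₂)

/-- A Δ₂-saturated set of time-edges in `E`: a Δ₂-indivisible subset of `E` such that
adding any other time-edge of `E` destroys indivisibility. -/
def Saturated (Δ₂ : ℕ) (E S : Set TimeEdge) : Prop :=
  S ⊆ E ∧ Indivisible Δ₂ S ∧ ∀ te ∈ E, te ∉ S → ¬ Indivisible Δ₂ (insert te S)

/-- The induced temporal subgraph on a vertex set `A`. -/
def induced (E : Set TimeEdge) (A : Set ℕ) : Set TimeEdge :=
  {te ∈ E | ∀ v ∈ te.1, v ∈ A}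

/-- Two single time-edges are Δ-independent. -/
def TEIndep (Δ : ℕ) (te₁ te₂ : TimeEdge) : Prop :=
  (∀ v ∈ te₁.1, v ∉ te₂.1) ∨ Δ ≤ max te₁.2 te₂.2 - min te₁.2 te₂.2

-- helpers
def clampT (T t : ℕ) : ℕ := min (max t 1) T
def cmap (T : ℕ) (te : TimeEdge) : TimeEdge := (te.1, clampT T te.2)

lemma verts_cmap (T : ℕ) (K : Set TimeEdge) : verts (cmap T '' K) = verts K := by
  ext v
  constructor
  · rintro ⟨te, ⟨x, hx, rfl⟩, hv⟩; exact ⟨x, hx, hv⟩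
  · rintro ⟨x, hx, hv⟩; exact ⟨cmap T x, ⟨x, hx, rfl⟩, hv⟩

lemma times_cmap (T : ℕ) (K : Set TimeEdge) : times (cmap T '' K) = clampT T '' times K := by
  unfold times
  rw [← Set.image_comp, ← Set.image_comp]
  rfl

lemma mem_times {S : Set TimeEdge} {te : TimeEdge} (h : te ∈ S) : te.2 ∈ times S :=
  ⟨te, h, rfl⟩

lemma sInf_clamp (T : ℕ) (K : Set TimeEdge) (hne : K.Nonempty) :
    sInf (times (cmap T '' K)) = clampT T (sInf (times K)) := by
  have htne : (times K).Nonempty := hne.image _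
  rw [times_cmap]
  apply le_antisymm
  · exact Nat.sInf_le ⟨_, Nat.sInf_mem htne, rfl⟩
  · refine le_csInf (htne.image _) ?_
    rintro y ⟨x, hx, rfl⟩
    have := Nat.sInf_le hx
    unfold clampT; omega

lemma sSup_clamp (T : ℕ) (K : Set TimeEdge) (hne : K.Nonempty) (hfin : K.Finite) :
    sSup (times (cmap T '' K)) = clampT T (sSup (times K)) := by
  have htne : (times K).Nonempty := hne.image _
  have htfin : (times K).Finite := hfin.image _
  rw [times_cmap]
  apply le_antisymm
  · refine csSup_le (htne.image _) ?_
    rintro y ⟨x, hx, rfl⟩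
    have := le_csSup htfin.bddAbove hx
    unfold clampT; omega
  · exact le_csSup (htfin.image _).bddAbove ⟨_, Nat.sSup_mem htne htfin.bddAbove, rfl⟩

lemma clique_cmap (Δ₁ T : ℕ) (h1 : 1 ≤ Δ₁) (hT : 1 ≤ T) (K : Set TimeEdge)
    (hfin : K.Finite) (hK : IsTemporalClique Δ₁ K) :
    IsTemporalClique Δ₁ (cmap T '' K) := by
  rcases K.eq_empty_or_nonempty with rfl | hne
  · simp only [Set.image_empty]
    intro x hx
    exact absurd hx (by simp [verts])
  set a := sInf (times K) with ha
  set b := sSup (times K) with hb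
  have htne : (times K).Nonempty := hne.image _
  have htfin : (times K).Finite := hfin.image _
  have hab : a ≤ b := Nat.sInf_le (Nat.sSup_mem htne htfin.bddAbove)
  intro x hx y hy hxy
  rw [verts_cmap] at hx hy
  rw [sInf_clamp T K hne, sSup_clamp T K hne hfin]
  intro τ hτ
  simp only [Set.mem_Icc] at hτ
  -- any occurrence lies between a and b
  have hbound : ∀ t : ℕ, (s(x,y), t) ∈ K → a ≤ t ∧ t ≤ b := by
    intro t ht
    exact ⟨Nat.sInf_le (mem_times ht), le_csSup htfin.bddAbove (mem_times ht)⟩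
  by_cases hA : a ≤ τ ∧ τ + Δ₁ ≤ b + 1
  · -- case A
    obtain ⟨t, ht, hmem⟩ := hK x hx y hy hxy τ (by simp only [Set.mem_Icc]; unfold clampT at hτ; omega)
    refine ⟨clampT T t, ?_, ⟨(s(x,y), t), hmem, rfl⟩⟩
    simp only [Set.mem_Icc] at ht ⊢
    unfold clampT at hτ ⊢
    omega
  · -- case B : τ = clamp a and clamp b ≤ τ + Δ₁ - 1
    have hBc : τ = clampT T a ∧ clampT T b + 1 ≤ τ + Δ₁ := by
      unfold clampT at hτ ⊢; omega
    obtain ⟨t, ht, hmem⟩ := hK x hx y hy hxy a (by simp only [Set.mem_Icc]; omega)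
    have := hbound t hmem
    refine ⟨clampT T t, ?_, ⟨(s(x,y), t), hmem, rfl⟩⟩
    simp only [Set.mem_Icc]
    unfold clampT at hBc ⊢
    omega

lemma window_facts {T : ℕ} {K : Set TimeEdge} (hfin : K.Finite)
    (hw : ∃ te ∈ K, te.2 ∈ Set.Icc 1 T) :
    ∃ w, sInf (times K) ≤ w ∧ w ≤ sSup (times K) ∧ 1 ≤ w ∧ w ≤ T := by
  obtain ⟨te, hte, hw1, hw2⟩ := hw
  exact ⟨te.2, Nat.sInf_le (mem_times hte),
    le_csSup (hfin.image _).bddAbove (mem_times hte), hw1, hw2⟩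

lemma indep_sep {Δ₂ : ℕ} {K₁ K₂ : Set TimeEdge} (hΔ : 1 ≤ Δ₂)
    (h : ∀ s ∈ lifetime K₁, ∀ t ∈ lifetime K₂, Δ₂ ≤ max s t - min s t)
    (h1 : sInf (times K₁) ≤ sSup (times K₁)) (h2 : sInf (times K₂) ≤ sSup (times K₂)) :
    sSup (times K₁) + Δ₂ ≤ sInf (times K₂) ∨ sSup (times K₂) + Δ₂ ≤ sInf (times K₁) := by
  set a₁ := sInf (times K₁); set b₁ := sSup (times K₁)
  set a₂ := sInf (times K₂); set b₂ := sSup (times K₂)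
  by_contra hc
  push_neg at hc
  have H1 := h b₁ (by simp [lifetime, Set.mem_Icc]; omega) a₂ (by simp [lifetime, Set.mem_Icc]; omega)
  have H2 := h a₁ (by simp [lifetime, Set.mem_Icc]; omega) b₂ (by simp [lifetime, Set.mem_Icc]; omega)
  rcases le_or_gt a₂ b₁ with hle | hlt
  · rcases le_or_gt a₁ b₂ with hle' | hlt'
    · have H3 := h (max a₁ a₂) (by simp [lifetime, Set.mem_Icc]; omega)
        (max a₁ a₂) (by simp [lifetime, Set.mem_Icc]; omega)
      omega
    · omega
  · omega

lemma indep_cmap (Δ₂ T : ℕ) (hΔ : 1 ≤ Δ₂) (hT : 1 ≤ T) (K₁ K₂ : Set TimeEdge)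
    (h1f : K₁.Finite) (h2f : K₂.Finite)
    (hw1 : ∃ te ∈ K₁, te.2 ∈ Set.Icc 1 T) (hw2 : ∃ te ∈ K₂, te.2 ∈ Set.Icc 1 T)
    (h : Indep Δ₂ K₁ K₂) : Indep Δ₂ (cmap T '' K₁) (cmap T '' K₂) := by
  rcases h with h | h
  · left; rw [verts_cmap, verts_cmap]; exact h
  right
  have hne1 : K₁.Nonempty := ⟨_, hw1.choose_spec.1⟩
  have hne2 : K₂.Nonempty := ⟨_, hw2.choose_spec.1⟩
  obtain ⟨w₁, hw₁a, hw₁b, hw₁1, hw₁T⟩ := window_facts h1f hw1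
  obtain ⟨w₂, hw₂a, hw₂b, hw₂1, hw₂T⟩ := window_facts h2f hw2
  have key := indep_sep hΔ h (le_trans hw₁a hw₁b) (le_trans hw₂a hw₂b)
  intro s hs t ht
  simp only [lifetime, sInf_clamp _ _ hne1, sSup_clamp _ _ hne1 h1f,
    sInf_clamp _ _ hne2, sSup_clamp _ _ hne2 h2f, Set.mem_Icc] at hs ht
  unfold clampT at hs ht
  omega

lemma disjoint_cmap (Δ₂ T : ℕ) (hΔ : 1 ≤ Δ₂) (hT : 1 ≤ T) (K₁ K₂ : Set TimeEdge)
    (h1f : K₁.Finite) (h2f : K₂.Finite)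
    (hw1 : ∃ te ∈ K₁, te.2 ∈ Set.Icc 1 T) (hw2 : ∃ te ∈ K₂, te.2 ∈ Set.Icc 1 T)
    (h : Indep Δ₂ K₁ K₂) : Disjoint (cmap T '' K₁) (cmap T '' K₂) := by
  rw [Set.disjoint_left]
  rintro te ⟨x₁, hx₁, rfl⟩ ⟨x₂, hx₂, heq⟩
  have h12 : x₂.1 = x₁.1 ∧ clampT T x₂.2 = clampT T x₁.2 := by
    simpa [cmap, Prod.ext_iff] using heq
  obtain ⟨hefst, hesnd⟩ := h12
  obtain ⟨w₁, hw₁a, hw₁b, hw₁1, hw₁T⟩ := window_facts h1f hw1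
  obtain ⟨w₂, hw₂a, hw₂b, hw₂1, hw₂T⟩ := window_facts h2f hw2
  have ht₁ : sInf (times K₁) ≤ x₁.2 ∧ x₁.2 ≤ sSup (times K₁) :=
    ⟨Nat.sInf_le (mem_times hx₁), le_csSup (h1f.image _).bddAbove (mem_times hx₁)⟩
  have ht₂ : sInf (times K₂) ≤ x₂.2 ∧ x₂.2 ≤ sSup (times K₂) :=
    ⟨Nat.sInf_le (mem_times hx₂), le_csSup (h2f.image _).bddAbove (mem_times hx₂)⟩
  rcases h with h | h
  · have hv : x₁.1.out.1 ∈ verts K₁ := ⟨x₁, hx₁, Sym2.out_fst_mem _⟩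
    have hv2 : x₁.1.out.1 ∈ verts K₂ := ⟨x₂, hx₂, hefst ▸ Sym2.out_fst_mem _⟩
    exact Set.disjoint_left.mp h hv hv2
  · have hu1 : clampT T x₁.2 ∈ lifetime K₁ := by
      simp only [lifetime, Set.mem_Icc]; unfold clampT; omega
    have hu2 : clampT T x₁.2 ∈ lifetime K₂ := by
      simp only [lifetime, Set.mem_Icc]; rw [← hesnd]; unfold clampT; omega
    have := h _ hu1 _ hu2
    omega

lemma transform (Δ₁ Δ₂ T : ℕ) (h1 : 1 ≤ Δ₁) (h2 : Δ₁ < Δ₂) (hT : 1 ≤ T)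
    (E E₀ : Set TimeEdge) (hE : E.Finite) (hlife : times E ⊆ Set.Icc 1 T)
    (h₀f : E₀.Finite) (h₀c : IsClusterTemporalGraph Δ₁ Δ₂ E₀) :
    ∃ E' : Set TimeEdge, E'.Finite ∧ IsClusterTemporalGraph Δ₁ Δ₂ E' ∧
      times E' ⊆ Set.Icc 1 T ∧ (symmDiff E E').ncard ≤ (symmDiff E E₀).ncard := by
  have hΔ₂ : 1 ≤ Δ₂ := by omega
  obtain ⟨P, hPU, hPD, hPC, hPI⟩ := h₀c
  set PS : Set (Set TimeEdge) := {K | K ∈ P ∧ ∃ te ∈ K, te.2 ∈ Set.Icc 1 T} with hPS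
  set F : Set TimeEdge := ⋃₀ PS with hF
  have hFE : F ⊆ E₀ := by
    rintro x ⟨K, hK, hx⟩
    rw [← hPU]; exact ⟨K, hK.1, hx⟩
  have hFfin : F.Finite := h₀f.subset hFE
  have hKfin : ∀ K ∈ P, K.Finite := fun K hK =>
    h₀f.subset (hPU ▸ Set.subset_sUnion_of_mem hK)
  refine ⟨cmap T '' F, hFfin.image _, ?_, ?_, ?_⟩
  · refine ⟨(fun K => cmap T '' K) '' PS, ?_, ?_, ?_, ?_⟩
    · ext te
      constructor
      · rintro ⟨A, ⟨K, hK, rfl⟩, x, hx, rfl⟩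
        exact ⟨x, ⟨K, hK, hx⟩, rfl⟩
      · rintro ⟨x, ⟨K, hK, hx⟩, rfl⟩
        exact ⟨cmap T '' K, ⟨K, hK, rfl⟩, x, hx, rfl⟩
    · rintro A ⟨K₁, hK₁, rfl⟩ B ⟨K₂, hK₂, rfl⟩ hne
      have hKne : K₁ ≠ K₂ := fun h => hne (by rw [h])
      exact disjoint_cmap Δ₂ T hΔ₂ hT K₁ K₂ (hKfin _ hK₁.1) (hKfin _ hK₂.1)
        hK₁.2 hK₂.2 (hPI hK₁.1 hK₂.1 hKne)
    · rintro A ⟨K, hK, rfl⟩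
      exact clique_cmap Δ₁ T h1 hT K (hKfin _ hK.1) (hPC K hK.1)
    · rintro A ⟨K₁, hK₁, rfl⟩ B ⟨K₂, hK₂, rfl⟩ hne
      have hKne : K₁ ≠ K₂ := fun h => hne (by rw [h])
      exact indep_cmap Δ₂ T hΔ₂ hT K₁ K₂ (hKfin _ hK₁.1) (hKfin _ hK₂.1)
        hK₁.2 hK₂.2 (hPI hK₁.1 hK₂.1 hKne)
  · rintro t ⟨te, ⟨x, hx, rfl⟩, rfl⟩
    simp only [cmap, Set.mem_Icc]
    unfold clampT; omega
  · -- cost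
    have hcfix : ∀ te : TimeEdge, te ∈ E → cmap T te = te := by
      intro te hte
      have hw := hlife (mem_times hte)
      simp only [Set.mem_Icc] at hw
      have : clampT T te.2 = te.2 := by unfold clampT; omega
      simp only [cmap, this]
    have hsub1 : E ∩ E₀ ⊆ cmap T '' F := by
      rintro te ⟨hteE, hteE₀⟩
      rw [← hPU] at hteE₀
      obtain ⟨K, hK, hteK⟩ := hteE₀
      have hw : te.2 ∈ Set.Icc 1 T := hlife (mem_times hteE)
      have hmemF : te ∈ F := ⟨K, ⟨hK, te, hteK, hw⟩, hteK⟩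
      exact ⟨te, hmemF, hcfix te hteE⟩
    have hd1 : E \ (cmap T '' F) ⊆ E \ E₀ := by
      rintro te ⟨hteE, hne⟩
      exact ⟨hteE, fun h => hne (hsub1 ⟨hteE, h⟩)⟩
    have hd2 : (cmap T '' F) \ E ⊆ cmap T '' (F \ E) := by
      rintro te ⟨⟨x, hxF, rfl⟩, hne⟩
      refine ⟨x, ⟨hxF, fun hxE => hne ?_⟩, rfl⟩
      rw [hcfix x hxE]; exact hxE
    have h1c : (E \ (cmap T '' F)).ncard ≤ (E \ E₀).ncard :=
      Set.ncard_le_ncard hd1 (hE.diff)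
    have h2c : ((cmap T '' F) \ E).ncard ≤ (E₀ \ E).ncard :=
      calc ((cmap T '' F) \ E).ncard ≤ (cmap T '' (F \ E)).ncard :=
            Set.ncard_le_ncard hd2 ((hFfin.diff).image _)
        _ ≤ (F \ E).ncard := Set.ncard_image_le (hFfin.diff)
        _ ≤ (E₀ \ E).ncard := Set.ncard_le_ncard (Set.diff_subset_diff_left hFE) (h₀f.diff)
    rw [Set.symmDiff_def, Set.symmDiff_def,
      Set.ncard_union_eq disjoint_sdiff_sdiff (hE.diff) ((hFfin.image _).diff),
      Set.ncard_union_eq disjoint_sdiff_sdiff (hE.diff) (h₀f.diff)]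
    omega


theorem optimal_within_lifetime (Δ₁ Δ₂ T : ℕ) (h1 : 1 ≤ Δ₁) (h2 : Δ₁ < Δ₂) (hT : 1 ≤ T)
    (E : Set TimeEdge) (hE : E.Finite) (hlife : times E ⊆ Set.Icc 1 T) :
    ∃ E' : Set TimeEdge, E'.Finite ∧ IsClusterTemporalGraph Δ₁ Δ₂ E' ∧
      times E' ⊆ Set.Icc 1 T ∧
      ∀ E'' : Set TimeEdge, E''.Finite → IsClusterTemporalGraph Δ₁ Δ₂ E'' →
        (symmDiff E E').ncard ≤ (symmDiff E E'').ncard := by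
  set S : Set ℕ := {n | ∃ F : Set TimeEdge, F.Finite ∧ IsClusterTemporalGraph Δ₁ Δ₂ F ∧
    (symmDiff E F).ncard = n} with hS
  have hSne : S.Nonempty := by
    refine ⟨(symmDiff E ∅).ncard, ∅, Set.finite_empty, ⟨∅, ?_, ?_, ?_, ?_⟩, rfl⟩
    · simp
    · simp [Set.PairwiseDisjoint]
    · simp
    · simp
  obtain ⟨E₀, h₀f, h₀c, h₀eq⟩ := Nat.sInf_mem hSne
  obtain ⟨E', hfin, hclu, htimes, hcost⟩ :=
    transform Δ₁ Δ₂ T h1 h2 hT E E₀ hE hlife h₀f h₀c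
  refine ⟨E', hfin, hclu, htimes, fun E'' hf hc => ?_⟩
  calc (symmDiff E E').ncard ≤ (symmDiff E E₀).ncard := hcost
    _ = sInf S := h₀eq
    _ ≤ (symmDiff E E'').ncard := Nat.sInf_le ⟨E'', hf, hc, rfl⟩
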